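/- Let σ > 0 and c ∈ (0,1). Let T : ℕ → ℝ satisfy T(n) → ∞ and (log T(n))/n → 0 as n → ∞. For each n, let Z_{n,1},…,Z_{n,n} be i.i.d. standard normal random variables, Xₙ = Σ_{i=1}^{n} Z_{n,i}², Pₙ = c·σ²·√((log T(n))/n), U₁ₙ = (σ²/(σ²+Pₙ))^{n/2}·exp(Pₙ·Xₙ/(2σ²)), and sₙ = √((σ⁴/(σ⁴−Pₙ²))^{n/2} − 1). Then U₁ₙ/(sₙ·√(T(n)−1)) → 0 in probability as n → ∞. -/

import Mathlib

open MeasureTheory ProbabilityTheory Filter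
open scoped ENNReal NNReal

lemma aux_lintegral_prod_indep {Ω : Type*} [MeasurableSpace Ω] (μ : Measure Ω)
    [IsProbabilityMeasure μ] {ι : Type*} (g : ι → Ω → ℝ≥0∞) (hg : ∀ i, Measurable (g i))
    (hind : iIndepFun g μ) (s : Finset ι) :
    ∫⁻ ω, ∏ i ∈ s, g i ω ∂μ = ∏ i ∈ s, ∫⁻ ω, g i ω ∂μ := by
  classical
  induction s using Finset.induction_on with
  | empty => simp
  | @insert i t hit ih =>
    have hfun : (∏ j ∈ t, g j) = fun ω => ∏ j ∈ t, g j ω := by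
      funext ω; exact Finset.prod_apply ω t g
    have hmt : Measurable fun ω => ∏ j ∈ t, g j ω := Finset.measurable_prod t fun j _ => hg j
    have hIndep : IndepFun (g i) (fun ω => ∏ j ∈ t, g j ω) μ := by
      rw [← hfun]; exact (hind.indepFun_finset_prod_of_notMem hg hit).symm
    have key := lintegral_mul_eq_lintegral_mul_lintegral_of_indepFun''
      (hg i).aemeasurable hmt.aemeasurable hIndep
    simp only [Finset.prod_insert hit]
    exact key.trans (by rw [ih])

lemma aux_gaussian_mgf_sq {t : ℝ} (ht : t < 1/2) :
    ∫⁻ x, ENNReal.ofReal (Real.exp (t * x ^ 2)) ∂(gaussianReal 0 1)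
      = ENNReal.ofReal ((Real.sqrt (1 - 2*t))⁻¹) := by
  have hb : (0:ℝ) < 1/2 - t := by linarith
  rw [gaussianReal_of_var_ne_zero 0 one_ne_zero,
    lintegral_withDensity_eq_lintegral_mul _ (measurable_gaussianPDF 0 1)
      (by measurability)]
  have hpt : ∀ x : ℝ, (gaussianPDF 0 1 x) * ENNReal.ofReal (Real.exp (t * x ^ 2))
      = ENNReal.ofReal ((Real.sqrt (2*Real.pi))⁻¹ * Real.exp (-(1/2 - t) * x ^ 2)) := by
    intro x
    rw [gaussianPDF, ← ENNReal.ofReal_mul (gaussianPDFReal_nonneg _ _ _)]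
    congr 1
    rw [gaussianPDFReal]
    push_cast
    rw [mul_assoc, ← Real.exp_add]
    ring_nf
  calc ∫⁻ x, (gaussianPDF 0 1 * fun x => ENNReal.ofReal (Real.exp (t * x ^ 2))) x
      = ∫⁻ x, ENNReal.ofReal ((Real.sqrt (2*Real.pi))⁻¹ * Real.exp (-(1/2 - t) * x ^ 2)) := by
        refine lintegral_congr fun x => ?_
        simpa using hpt x
    _ = ENNReal.ofReal (∫ x, (Real.sqrt (2*Real.pi))⁻¹ * Real.exp (-(1/2 - t) * x ^ 2)) := by
        rw [ofReal_integral_eq_lintegral_ofReal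
          ((integrable_exp_neg_mul_sq hb).const_mul _)
          (ae_of_all _ fun x => by positivity)]
    _ = ENNReal.ofReal ((Real.sqrt (1 - 2*t))⁻¹) := by
        congr 1
        rw [integral_const_mul, integral_gaussian, ← Real.sqrt_inv,
          ← Real.sqrt_mul (by positivity), ← Real.sqrt_inv]
        congr 1
        have hπ := Real.pi_pos
        have h1 : (1:ℝ) - 2*t ≠ 0 := by linarith
        field_simp

set_option maxHeartbeats 1000000 in
/-- If `σ > 0`, `c ∈ (0,1)`, `T n → ∞`, `log (T n) / n → 0`, `Xₙ = Σᵢ Z_{n,i}²` is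
chi-squared with `n` degrees of freedom, `Pₙ = c σ² √(log (T n) / n)`,
`U₁ₙ = (σ²/(σ²+Pₙ))^(n/2) exp (Pₙ Xₙ/(2σ²))` and `sₙ = √((σ⁴/(σ⁴-Pₙ²))^(n/2) - 1)`,
then `U₁ₙ / (sₙ √(T n - 1)) → 0` in probability. -/
theorem stmt_10
    (σ c : ℝ) (hσ : 0 < σ) (hc0 : 0 < c) (hc1 : c < 1)
    (T : ℕ → ℝ) (hT : Tendsto T atTop atTop)
    (hlog : Tendsto (fun n => Real.log (T n) / n) atTop (nhds 0))
    (Ω : ℕ → Type) [∀ n, MeasurableSpace (Ω n)]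
    (μ : ∀ n, Measure (Ω n)) [∀ n, IsProbabilityMeasure (μ n)]
    (Z : ∀ n, Fin n → Ω n → ℝ) (hZm : ∀ n i, Measurable (Z n i))
    (hZ : ∀ n i, (μ n).map (Z n i) = gaussianReal 0 1)
    (hindep : ∀ n, iIndepFun (Z n) (μ n)) :
    ∀ ε : ℝ, 0 < ε →
      Tendsto (fun n => μ n {ω | ε ≤
        |((σ ^ 2 / (σ ^ 2 + c * σ ^ 2 * Real.sqrt (Real.log (T n) / n))) ^ ((n : ℝ) / 2)
            * Real.exp ((c * σ ^ 2 * Real.sqrt (Real.log (T n) / n))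
                * (∑ i, Z n i ω ^ 2) / (2 * σ ^ 2)))
          / (Real.sqrt ((σ ^ 4 / (σ ^ 4 - (c * σ ^ 2 * Real.sqrt (Real.log (T n) / n)) ^ 2))
                ^ ((n : ℝ) / 2) - 1)
              * Real.sqrt (T n - 1))|})
        atTop (nhds 0) := by
  intro ε hε
  have hc2 : (0:ℝ) < c ^ 2 := by positivity
  have hLtop : Tendsto (fun n => Real.log (T n)) atTop atTop :=
    Real.tendsto_log_atTop.comp hT
  set B : ℕ → ℝ := fun n => (2/ε) * Real.exp (-((1 - c^2)/2) * Real.log (T n)) with hBdef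
  have hBto : Tendsto (fun n => ENNReal.ofReal (B n)) atTop (nhds 0) := by
    have h1 : Tendsto (fun n => -((1 - c^2)/2) * Real.log (T n)) atTop atBot :=
      Tendsto.const_mul_atTop_of_neg (by nlinarith) hLtop
    have h2 : Tendsto B atTop (nhds 0) := by
      have h3 := (Real.tendsto_exp_atBot.comp h1).const_mul (2/ε)
      simpa [hBdef] using h3
    have h4 := (ENNReal.continuous_ofReal.tendsto 0).comp h2
    rw [ENNReal.ofReal_zero] at h4; exact h4
  refine tendsto_of_tendsto_of_tendsto_of_le_of_le' tendsto_const_nhds hBto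
    (Eventually.of_forall fun n => zero_le) ?_
  have hlog2 : (0:ℝ) < Real.log 2 := Real.log_pos (by norm_num)
  have e1 : ∀ᶠ n in atTop, (2*Real.log 2)/c^2 ≤ Real.log (T n) :=
    hLtop.eventually_ge_atTop _
  have e2 : ∀ᶠ n in atTop, 2 ≤ T n := hT.eventually_ge_atTop 2
  have e3 : ∀ᶠ n in atTop, Real.log (T n) / n ≤ 1/(2*c^2) :=
    hlog.eventually (eventually_le_nhds (by positivity))
  have e4 : ∀ᶠ n : ℕ in atTop, 1 ≤ n := eventually_ge_atTop 1
  filter_upwards [e1, e2, e3, e4] with n hn1 hn2 hn3 hn4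
  -- basic quantities
  have hn0 : (0:ℝ) < n := by exact_mod_cast hn4
  have hLpos : 0 < Real.log (T n) := lt_of_lt_of_le (by positivity) hn1
  set q : ℝ := Real.log (T n) / n with hq
  have hq0 : 0 < q := div_pos hLpos hn0
  set p : ℝ := c * Real.sqrt q with hp
  have hp0 : 0 < p := mul_pos hc0 (Real.sqrt_pos.mpr hq0)
  have hpsq : p^2 = c^2 * q := by rw [hp, mul_pow, Real.sq_sqrt hq0.le]
  have hpsq_le : p^2 ≤ 1/2 := by
    rw [hpsq]
    calc c^2 * q ≤ c^2 * (1/(2*c^2)) := by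
          exact mul_le_mul_of_nonneg_left hn3 hc2.le
      _ = 1/2 := by field_simp
  have hp1 : p < 1 := by nlinarith
  have h1p : (0:ℝ) < 1 - p := by linarith
  have h1p2 : (0:ℝ) < 1 - p^2 := by nlinarith
  have h1pp : (0:ℝ) < 1 + p := by linarith
  set A : ℝ := ((1 - p^2)⁻¹) ^ ((n:ℝ)/2) with hA
  set K : ℝ := ((1 + p)⁻¹) ^ ((n:ℝ)/2) with hK
  have hApos : 0 < A := Real.rpow_pos_of_pos (by positivity) _
  have hKpos : 0 < K := Real.rpow_pos_of_pos (by positivity) _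
  -- bounds on A
  have hAeq : A = Real.exp (-Real.log (1 - p^2) * ((n:ℝ)/2)) := by
    rw [hA, Real.rpow_def_of_pos (by positivity), Real.log_inv]
  have hAub : A ≤ Real.exp (c^2 * Real.log (T n)) := by
    rw [hAeq]
    apply Real.exp_le_exp.mpr
    have hneg : -Real.log (1 - p^2) ≤ 2 * p^2 := by
      have h2 : (1:ℝ) + 2*p^2 ≤ Real.exp (2*p^2) := by
        linarith [Real.add_one_le_exp (2*p^2)]
      have h3 : Real.exp (-(2*p^2)) ≤ (1 + 2*p^2)⁻¹ := by
        rw [Real.exp_neg]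
        exact inv_anti₀ (by positivity) h2
      have h4 : (1 + 2*p^2)⁻¹ ≤ 1 - p^2 := by
        rw [inv_eq_one_div, div_le_iff₀ (by positivity)]
        nlinarith
      have h5 := (Real.le_log_iff_exp_le h1p2).mpr (le_trans h3 h4)
      linarith
    calc -Real.log (1 - p^2) * ((n:ℝ)/2) ≤ (2*p^2) * ((n:ℝ)/2) := by
          apply mul_le_mul_of_nonneg_right hneg (by positivity)
      _ = c^2 * Real.log (T n) := by
          rw [hpsq, hq]; field_simp
  have hAlb : Real.exp (c^2 * Real.log (T n) / 2) ≤ A := by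
    rw [hAeq]
    apply Real.exp_le_exp.mpr
    have hneg : p^2 ≤ -Real.log (1 - p^2) := by
      rw [le_neg, ← Real.log_exp (-p^2)]
      apply Real.log_le_log (by positivity)
      linarith [Real.add_one_le_exp (-p^2)]
    calc c^2 * Real.log (T n) / 2 = p^2 * ((n:ℝ)/2) := by
          rw [hpsq, hq]; field_simp
      _ ≤ -Real.log (1 - p^2) * ((n:ℝ)/2) := by
          apply mul_le_mul_of_nonneg_right hneg (by positivity)
  have hA2 : (2:ℝ) ≤ A := by
    refine le_trans ?_ hAlb
    have h6 := (div_le_iff₀ hc2).mp hn1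
    have h7 : Real.log (T n) * c^2 = c^2 * Real.log (T n) := mul_comm _ _
    calc (2:ℝ) = Real.exp (Real.log 2) := (Real.exp_log (by norm_num)).symm
      _ ≤ Real.exp (c^2 * Real.log (T n) / 2) := Real.exp_le_exp.mpr (by linarith)
  set D : ℝ := Real.sqrt (A - 1) * Real.sqrt (T n - 1) with hD
  have hDpos : 0 < D := by
    apply mul_pos (Real.sqrt_pos.mpr (by linarith)) (Real.sqrt_pos.mpr (by linarith))
  -- rewrite the event set
  have hbase1 : σ ^ 2 / (σ ^ 2 + c * σ ^ 2 * Real.sqrt q) = (1 + p)⁻¹ := by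
    have h : σ ^ 2 + c * σ ^ 2 * Real.sqrt q = σ ^ 2 * (1 + p) := by rw [hp]; ring
    rw [h, div_mul_eq_div_div, div_self (by positivity), one_div]
  have hbase2 : σ ^ 4 / (σ ^ 4 - (c * σ ^ 2 * Real.sqrt q) ^ 2) = (1 - p^2)⁻¹ := by
    have h : σ ^ 4 - (c * σ ^ 2 * Real.sqrt q) ^ 2 = σ ^ 4 * (1 - p^2) := by rw [hp]; ring
    rw [h, div_mul_eq_div_div, div_self (by positivity), one_div]
  have harg : ∀ ω, (c * σ ^ 2 * Real.sqrt q) * (∑ i, Z n i ω ^ 2) / (2 * σ ^ 2)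
      = p * (∑ i, Z n i ω ^ 2) / 2 := by
    intro ω
    rw [hp]
    field_simp
  have hεDK : 0 < ε * D / K := div_pos (mul_pos hε hDpos) hKpos
  have hsetE : {ω | ε ≤
        |((σ ^ 2 / (σ ^ 2 + c * σ ^ 2 * Real.sqrt q)) ^ ((n : ℝ) / 2)
            * Real.exp ((c * σ ^ 2 * Real.sqrt q) * (∑ i, Z n i ω ^ 2) / (2 * σ ^ 2)))
          / (Real.sqrt ((σ ^ 4 / (σ ^ 4 - (c * σ ^ 2 * Real.sqrt q) ^ 2))
                ^ ((n : ℝ) / 2) - 1) * Real.sqrt (T n - 1))|}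
      = {ω : Ω n | ENNReal.ofReal (ε * D / K)
          ≤ ENNReal.ofReal (Real.exp (p * (∑ i, Z n i ω ^ 2) / 2))} := by
    ext ω
    simp only [Set.mem_setOf_eq, hbase1, hbase2, harg, ← hA, ← hK, ← hD]
    rw [abs_of_pos (div_pos (mul_pos hKpos (Real.exp_pos _)) hDpos),
      ENNReal.ofReal_le_ofReal_iff (Real.exp_nonneg _),
      le_div_iff₀ hDpos, div_le_iff₀ hKpos, mul_comm (Real.exp _) K]
  rw [hsetE]
  -- Markov
  set g : Ω n → ℝ≥0∞ := fun ω => ENNReal.ofReal (Real.exp (p * (∑ i, Z n i ω ^ 2) / 2))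
    with hgdef
  have hXm : Measurable fun ω => ∑ i, Z n i ω ^ 2 :=
    Finset.measurable_sum _ fun i _ => (hZm n i).pow_const 2
  have hgm : Measurable g :=
    (Real.measurable_exp.comp ((hXm.const_mul p).div_const 2)).ennreal_ofReal
  have hmarkov := meas_ge_le_lintegral_div (μ := μ n) hgm.aemeasurable
    (ε := ENNReal.ofReal (ε * D / K)) (ENNReal.ofReal_pos.mpr hεDK).ne' ENNReal.ofReal_ne_top
  -- compute the integral
  have hφm : Measurable fun x : ℝ => ENNReal.ofReal (Real.exp ((p/2) * x ^ 2)) :=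
    (Real.measurable_exp.comp ((measurable_id.pow_const 2).const_mul (p/2))).ennreal_ofReal
  have hint : ∫⁻ ω, g ω ∂(μ n) = ENNReal.ofReal (((Real.sqrt (1 - p))⁻¹) ^ n) := by
    have hgprod : ∀ ω, g ω
        = ∏ i : Fin n, ((fun x : ℝ => ENNReal.ofReal (Real.exp ((p/2) * x ^ 2))) ∘ Z n i) ω := by
      intro ω
      simp only [hgdef, Function.comp_apply]
      rw [← ENNReal.ofReal_prod_of_nonneg (fun i _ => Real.exp_nonneg _), ← Real.exp_sum]
      congr 1
      congr 1
      rw [Finset.mul_sum, Finset.sum_div]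
      exact Finset.sum_congr rfl fun i _ => by ring
    calc ∫⁻ ω, g ω ∂(μ n)
        = ∏ i : Fin n, ∫⁻ ω, ENNReal.ofReal (Real.exp ((p/2) * (Z n i ω) ^ 2)) ∂(μ n) := by
          rw [lintegral_congr hgprod]
          exact aux_lintegral_prod_indep (μ n) _ (fun i => hφm.comp (hZm n i))
            ((hindep n).comp _ (fun i => hφm)) Finset.univ
      _ = ∏ _i : Fin n, ENNReal.ofReal ((Real.sqrt (1 - p))⁻¹) := by
          refine Finset.prod_congr rfl fun i _ => ?_
          have hmap : ∫⁻ ω, ENNReal.ofReal (Real.exp ((p/2) * (Z n i ω) ^ 2)) ∂(μ n)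
              = ∫⁻ x, ENNReal.ofReal (Real.exp ((p/2) * x ^ 2)) ∂((μ n).map (Z n i)) :=
            (lintegral_map hφm (hZm n i)).symm
          have harg2 : (1:ℝ) - 2*(p/2) = 1 - p := by ring
          rw [hmap, hZ n i, aux_gaussian_mgf_sq (by linarith), harg2]
      _ = ENNReal.ofReal (((Real.sqrt (1 - p))⁻¹) ^ n) := by
          rw [Finset.prod_const, Finset.card_univ, Fintype.card_fin,
            ← ENNReal.ofReal_pow (by positivity)]
  -- the final bound
  have hM : ((Real.sqrt (1 - p))⁻¹ : ℝ) ^ n = ((1 - p)⁻¹) ^ ((n:ℝ)/2) := by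
    have h1 : ((1 - p)⁻¹ : ℝ) ^ ((n:ℝ)/2) = (((1 - p)⁻¹ : ℝ) ^ ((1:ℝ)/2)) ^ (n:ℕ) := by
      rw [← Real.rpow_natCast (((1 - p)⁻¹ : ℝ) ^ ((1:ℝ)/2)) n,
        ← Real.rpow_mul (by positivity)]
      congr 1
      ring
    rw [h1, ← Real.sqrt_eq_rpow, Real.sqrt_inv]
  have hMK : ((Real.sqrt (1 - p))⁻¹ : ℝ) ^ n * K = A := by
    rw [hM, hK, hA, ← Real.mul_rpow (by positivity) (by positivity)]
    congr 1
    rw [← mul_inv]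
    congr 1
    ring
  have hfinal : (((Real.sqrt (1 - p))⁻¹ : ℝ) ^ n) / (ε * D / K) ≤ B n := by
    have hKD : (((Real.sqrt (1 - p))⁻¹ : ℝ) ^ n) / (ε * D / K) = A / (ε * D) := by
      rw [← hMK]
      field_simp
    rw [hKD]
    have hT0 : (0:ℝ) < T n := by linarith
    have hsA : Real.sqrt A * Real.sqrt (T n) / 2 ≤ D := by
      rw [hD]
      have h22 : Real.sqrt 2 * Real.sqrt 2 = 2 := Real.mul_self_sqrt (by norm_num)
      have e : Real.sqrt A * Real.sqrt (T n) / 2 = Real.sqrt (A/2) * Real.sqrt (T n / 2) := by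
        rw [Real.sqrt_div hApos.le, Real.sqrt_div hT0.le]
        field_simp
        exact Real.sq_sqrt (by norm_num)
      rw [e]
      exact mul_le_mul (Real.sqrt_le_sqrt (by linarith)) (Real.sqrt_le_sqrt (by linarith))
        (Real.sqrt_nonneg _) (Real.sqrt_nonneg _)
    have hsqrtT : Real.sqrt (T n) = Real.exp (Real.log (T n) / 2) := by
      rw [Real.exp_half, Real.exp_log hT0]
    have hsqrtA : Real.sqrt A ≤ Real.exp (c^2 * Real.log (T n) / 2) := by
      calc Real.sqrt A ≤ Real.sqrt (Real.exp (c^2 * Real.log (T n))) := Real.sqrt_le_sqrt hAub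
        _ = Real.exp (c^2 * Real.log (T n) / 2) := (Real.exp_half _).symm
    calc A / (ε * D) ≤ A / (ε * (Real.sqrt A * Real.sqrt (T n) / 2)) := by
          apply div_le_div_of_nonneg_left hApos.le (by positivity)
          exact mul_le_mul_of_nonneg_left hsA hε.le
      _ = 2 * Real.sqrt A / (ε * Real.sqrt (T n)) := by
          have hsApos : (0:ℝ) < Real.sqrt A := Real.sqrt_pos.mpr hApos
          have hsTpos : (0:ℝ) < Real.sqrt (T n) := Real.sqrt_pos.mpr hT0
          have h9 := Real.mul_self_sqrt hApos.le
          rw [div_eq_div_iff (mul_pos hε (div_pos (mul_pos hsApos hsTpos) two_pos)).ne'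
            (mul_pos hε hsTpos).ne']
          linear_combination (-(ε * Real.sqrt (T n))) * h9
      _ ≤ 2 * Real.exp (c^2 * Real.log (T n) / 2) / (ε * Real.exp (Real.log (T n) / 2)) := by
          rw [hsqrtT]
          gcongr
      _ = B n := by
          show 2 * Real.exp (c^2 * Real.log (T n) / 2) / (ε * Real.exp (Real.log (T n) / 2))
              = 2/ε * Real.exp (-((1 - c^2)/2) * Real.log (T n))
          rw [show -((1 - c^2)/2) * Real.log (T n)
              = c^2 * Real.log (T n) / 2 - Real.log (T n) / 2 from by ring, Real.exp_sub]
          rw [div_mul_div_comm]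
  calc μ n {ω : Ω n | ENNReal.ofReal (ε * D / K) ≤ g ω}
      ≤ (∫⁻ ω, g ω ∂(μ n)) / ENNReal.ofReal (ε * D / K) := hmarkov
    _ = ENNReal.ofReal ((((Real.sqrt (1 - p))⁻¹ : ℝ) ^ n) / (ε * D / K)) := by
        rw [hint, ENNReal.ofReal_div_of_pos hεDK]
    _ ≤ ENNReal.ofReal (B n) := ENNReal.ofReal_le_ofReal hfinal
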